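/- Let Ω ⊂ ℂ be a bounded open set and let ω, F be real-valued functions continuous on the closure of Ω and twice continuously differentiable on Ω, such that Δω = 2·sinh(2ω) on Ω, ΔF = 4F on Ω, F ≥ 0 on the closure of Ω, and ω ≤ F on the boundary ∂Ω. Then ω ≤ F everywhere on Ω. -/

import Mathlib

open Set

/-- 1-d second derivative test at an interior minimum. -/
lemma lemA {g φ : ℝ → ℝ} {c δ : ℝ} (hδ : 0 < δ)
    (hg : ∀ t ∈ Set.Ioo (-δ) δ, HasDerivAt g (φ t) t)
    (hφ : HasDerivAt φ c 0)
    (hmin : ∀ t ∈ Set.Ioo (-δ) δ, g 0 ≤ g t) : 0 ≤ c := by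
  have h0 : (0:ℝ) ∈ Set.Ioo (-δ) δ := by constructor <;> linarith
  have hloc : IsLocalMin g 0 :=
    Filter.eventually_of_mem ((isOpen_Ioo).mem_nhds h0) hmin
  have hφ0 : φ 0 = 0 := hloc.hasDerivAt_eq_zero (hg 0 h0)
  by_contra hc
  push_neg at hc
  have hslope := hasDerivAt_iff_tendsto_slope.1 hφ
  have hev : ∀ᶠ t in nhdsWithin 0 {(0:ℝ)}ᶜ, slope φ 0 t < 0 :=
    hslope.eventually (gt_mem_nhds hc)
  rw [eventually_nhdsWithin_iff, Metric.eventually_nhds_iff] at hev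
  obtain ⟨ε, hε, hev⟩ := hev
  set t0 : ℝ := min ε δ / 2 with ht0def
  have hminpos : 0 < min ε δ := lt_min hε hδ
  have ht0pos : 0 < t0 := by positivity
  have ht0ε : t0 < ε := by
    have := min_le_left ε δ
    simp only [ht0def]; linarith
  have ht0δ : t0 < δ := by
    have := min_le_right ε δ
    simp only [ht0def]; linarith
  have hφneg : ∀ ξ ∈ Set.Ioo (0:ℝ) t0, φ ξ < 0 := by
    intro ξ hξ
    have hξ0 : (0:ℝ) < ξ := hξ.1
    have hdist : dist ξ 0 < ε := by
      rw [Real.dist_eq, sub_zero, abs_of_pos hξ0]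
      linarith [hξ.2]
    have hne : ξ ∈ ({(0:ℝ)}ᶜ : Set ℝ) := by
      simp; linarith
    have := hev hdist hne
    rw [slope_def_field, hφ0, sub_zero, sub_zero] at this
    rcases div_neg_iff.1 this with h | h
    · linarith [h.2]
    · exact h.1
  have hcont : ContinuousOn g (Set.Icc 0 t0) := by
    intro x hx
    have hxIoo : x ∈ Set.Ioo (-δ) δ := ⟨by linarith [hx.1], by linarith [hx.2]⟩
    exact ((hg x hxIoo).continuousAt).continuousWithinAt
  have hderiv : ∀ x ∈ Set.Ioo (0:ℝ) t0, HasDerivAt g (φ x) x := by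
    intro x hx
    exact hg x ⟨by linarith [hx.1], by linarith [hx.2]⟩
  obtain ⟨ξ, hξmem, hξeq⟩ := exists_hasDerivAt_eq_slope g φ ht0pos hcont hderiv
  have hφξ : φ ξ < 0 := hφneg ξ hξmem
  rw [hξeq] at hφξ
  have hnum : g t0 - g 0 < 0 := by
    rcases div_neg_iff.1 hφξ with h | h
    · linarith [h.2]
    · exact h.1
  exact absurd (hmin t0 ⟨by linarith, ht0δ⟩) (not_le.2 (by linarith))

lemma deriv2_eval {f : ℂ → ℝ} {Ω : Set ℂ} (hΩ : IsOpen Ω) {q : ℂ} (hq : q ∈ Ω)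
    (hf : ContDiffOn ℝ 2 f Ω) (v : ℂ) :
    HasFDerivAt (fun w => fderiv ℝ f w v)
      ((ContinuousLinearMap.apply ℝ ℝ v).comp (fderiv ℝ (fderiv ℝ f) q)) q := by
  have h1 : ContDiffOn ℝ 1 (fderiv ℝ f) Ω := hf.fderiv_of_isOpen hΩ (by norm_num)
  have hd : DifferentiableAt ℝ (fderiv ℝ f) q :=
    (h1.differentiableOn (by norm_num)).differentiableAt (hΩ.mem_nhds hq)
  exact (ContinuousLinearMap.apply ℝ ℝ v).hasFDerivAt.comp q hd.hasFDerivAt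

lemma sec_nonneg {u : ℂ → ℝ} {Ω : Set ℂ} (hΩ : IsOpen Ω) {q : ℂ} (hq : q ∈ Ω)
    (hC2 : ContDiffOn ℝ 2 u Ω) (hmin : ∀ z ∈ Ω, u q ≤ u z) (v : ℂ) :
    0 ≤ fderiv ℝ (fun w => fderiv ℝ u w v) q v := by
  have hD := deriv2_eval hΩ hq hC2 v
  rw [hD.fderiv]
  obtain ⟨r, hr, hball⟩ := Metric.isOpen_iff.1 hΩ q hq
  set δ : ℝ := r / (‖v‖ + 1) with hδdef
  have hδ : 0 < δ := by positivity
  have hmem : ∀ t ∈ Set.Ioo (-δ) δ, q + t • v ∈ Ω := by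
    intro t ht
    apply hball
    rw [Metric.mem_ball, dist_eq_norm]
    have habs : |t| < δ := abs_lt.2 ⟨ht.1, ht.2⟩
    have h1 : ‖q + t • v - q‖ = |t| * ‖v‖ := by
      simp [norm_smul]
    rw [h1]
    have hv : ‖v‖ < ‖v‖ + 1 := by linarith
    calc |t| * ‖v‖ ≤ |t| * (‖v‖ + 1) := by
          exact mul_le_mul_of_nonneg_left (by linarith) (abs_nonneg t)
      _ < δ * (‖v‖ + 1) := by
          exact mul_lt_mul_of_pos_right habs (by positivity)
      _ = r := by
          rw [hδdef, div_mul_cancel₀]; positivity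
  set L : ℝ → ℂ := fun t => q + t • v with hLdef
  have hL : ∀ t : ℝ, HasDerivAt L v t := by
    intro t
    simpa [hLdef] using ((hasDerivAt_id t).smul_const v).const_add q
  have hL0 : L 0 = q := by simp [hLdef]
  have hg : ∀ t ∈ Set.Ioo (-δ) δ, HasDerivAt (fun s => u (L s)) (fderiv ℝ u (L t) v) t := by
    intro t ht
    have hu : DifferentiableAt ℝ u (L t) :=
      (hC2.differentiableOn (by norm_num)).differentiableAt (hΩ.mem_nhds (hmem t ht))
    exact hu.hasFDerivAt.comp_hasDerivAt t (hL t)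
  have hφ : HasDerivAt (fun t => fderiv ℝ u (L t) v)
      (((ContinuousLinearMap.apply ℝ ℝ v).comp (fderiv ℝ (fderiv ℝ u) q)) v) 0 := by
    have hD' : HasFDerivAt (fun w => fderiv ℝ u w v)
        ((ContinuousLinearMap.apply ℝ ℝ v).comp (fderiv ℝ (fderiv ℝ u) q)) (L 0) := by
      rw [hL0]; exact hD
    exact hD'.comp_hasDerivAt 0 (hL 0)
  have hmin' : ∀ t ∈ Set.Ioo (-δ) δ, (fun s => u (L s)) 0 ≤ (fun s => u (L s)) t := by
    intro t ht
    simp only [hL0]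
    exact hmin _ (hmem t ht)
  exact lemA hδ hg hφ hmin'

/-- The Euclidean Laplacian of a real-valued function on (an open subset of) `ℂ ≅ ℝ²`:
`Δf = ∂²f/∂x² + ∂²f/∂y²`. -/
noncomputable def laplacian (f : ℂ → ℝ) (z : ℂ) : ℝ :=
  fderiv ℝ (fun w => fderiv ℝ f w 1) z 1 +
    fderiv ℝ (fun w => fderiv ℝ f w Complex.I) z Complex.I

/-- Maximum-principle comparison: if `Δω = 2 sinh(2ω)` and `ΔF = 4F` on a bounded open
set `Ω`, with `F ≥ 0` on the closure and `ω ≤ F` on the boundary, then `ω ≤ F` on `Ω`. -/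
theorem stmt2 (Ω : Set ℂ) (hΩopen : IsOpen Ω) (hΩbdd : Bornology.IsBounded Ω)
    (ω F : ℂ → ℝ)
    (hωcont : ContinuousOn ω (closure Ω)) (hFcont : ContinuousOn F (closure Ω))
    (hωC2 : ContDiffOn ℝ 2 ω Ω) (hFC2 : ContDiffOn ℝ 2 F Ω)
    (hωeq : ∀ z ∈ Ω, laplacian ω z = 2 * Real.sinh (2 * ω z))
    (hFeq : ∀ z ∈ Ω, laplacian F z = 4 * F z)
    (hFpos : ∀ z ∈ closure Ω, 0 ≤ F z)
    (hbdry : ∀ z ∈ frontier Ω, ω z ≤ F z) :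
    ∀ z ∈ Ω, ω z ≤ F z := by
  intro z hz
  set u : ℂ → ℝ := fun w => F w - ω w with hu
  have hcomp : IsCompact (closure Ω) := hΩbdd.isCompact_closure
  have hne : (closure Ω).Nonempty := ⟨z, subset_closure hz⟩
  have hucont : ContinuousOn u (closure Ω) := hFcont.sub hωcont
  obtain ⟨q, hqmem, hqmin⟩ := hcomp.exists_isMinOn hne hucont
  by_contra hcon
  push_neg at hcon
  have huz : u z < 0 := by simp only [hu]; linarith
  have huq : u q < 0 := lt_of_le_of_lt (hqmin (subset_closure hz)) huz
  have hqΩ : q ∈ Ω := by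
    by_contra h
    have hfr : q ∈ frontier Ω := by
      rw [frontier, hΩopen.interior_eq]
      exact ⟨hqmem, h⟩
    have := hbdry q hfr
    simp only [hu] at huq
    linarith
  have hF0 : 0 ≤ F q := hFpos q (subset_closure hqΩ)
  have hω : F q < ω q := by simp only [hu] at huq; linarith
  have huC2 : ContDiffOn ℝ 2 u Ω := hFC2.sub hωC2
  have hmin' : ∀ w ∈ Ω, u q ≤ u w := fun w hw => hqmin (subset_closure hw)
  have key : ∀ v : ℂ, fderiv ℝ (fun w => fderiv ℝ u w v) q v
      = fderiv ℝ (fun w => fderiv ℝ F w v) q v - fderiv ℝ (fun w => fderiv ℝ ω w v) q v := by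
    intro v
    have hev : (fun w => fderiv ℝ u w v) =ᶠ[nhds q]
        (fun w => fderiv ℝ F w v - fderiv ℝ ω w v) := by
      filter_upwards [hΩopen.mem_nhds hqΩ] with w hw
      have hFd : DifferentiableAt ℝ F w :=
        (hFC2.differentiableOn (by norm_num)).differentiableAt (hΩopen.mem_nhds hw)
      have hωd : DifferentiableAt ℝ ω w :=
        (hωC2.differentiableOn (by norm_num)).differentiableAt (hΩopen.mem_nhds hw)
      simp only [hu]
      rw [fderiv_fun_sub hFd hωd]
      simp
    rw [hev.fderiv_eq]
    have h1 := deriv2_eval hΩopen hqΩ hFC2 v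
    have h2 := deriv2_eval hΩopen hqΩ hωC2 v
    rw [fderiv_fun_sub h1.differentiableAt h2.differentiableAt]
    rw [h1.fderiv, h2.fderiv]
    simp
  have hlap : laplacian u q = laplacian F q - laplacian ω q := by
    simp only [laplacian, key 1, key Complex.I]; ring
  have hsinh : 2 * ω q ≤ Real.sinh (2 * ω q) :=
    Real.self_le_sinh_iff.2 (by linarith)
  have hlapneg : laplacian u q < 0 := by
    rw [hlap, hFeq q hqΩ, hωeq q hqΩ]
    linarith
  have hlapnn : 0 ≤ laplacian u q := by
    have h1 := sec_nonneg hΩopen hqΩ huC2 hmin' 1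
    have h2 := sec_nonneg hΩopen hqΩ huC2 hmin' Complex.I
    simp only [laplacian]
    linarith
  linarith
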